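/- Suppose T : ℝ^{kd} → ℝ^{kd} is 'block-wise' in the sense that T(z) = (T₁(z₁),...,T_d(z_d)) with each T_i : ℝ → ℝ^k, and suppose for each i there exist z_i⁽⁰⁾,...,z_i⁽ᵏ⁾ ∈ ℝ such that T_i(z_i⁽¹⁾)−T_i(z_i⁽⁰⁾), ..., T_i(z_i⁽ᵏ⁾)−T_i(z_i⁽⁰⁾) are linearly independent in ℝ^k. If an invertible-matrix relation T(z) = L T'(v(z)) + b holds for all z (for some function v, matrix L and vector b), then evaluating at the points z⁽ᵖ,ⁱ⁾ (which differ from a base point z⁽⁰⁾ only in coordinate i) yields an invertible kd×kd matrix Δ of differences T(z⁽ᵖ,ⁱ⁾)−T(z⁽⁰⁾) which is block diagonal with invertible blocks; hence L is invertible. -/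

import Mathlib

/-- If `T` is block-wise with each block having `k` linearly independent difference vectors,
and `T(z) = L T'(v(z)) + b` for all `z`, then `L` is invertible. -/
theorem invertible_of_blockwise_relation (d k : ℕ)
    (T : (Fin d → ℝ) → (Fin d × Fin k → ℝ))
    (Ti : Fin d → ℝ → (Fin k → ℝ))
    (hT : ∀ z i a, T z (i, a) = Ti i (z i) a)
    (hind : ∀ i : Fin d, ∃ (z0 : ℝ) (zs : Fin k → ℝ),
        LinearIndependent ℝ (fun p : Fin k => Ti i (zs p) - Ti i z0))
    (T' : (Fin d → ℝ) → (Fin d × Fin k → ℝ))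
    (v : (Fin d → ℝ) → (Fin d → ℝ))
    (L : Matrix (Fin d × Fin k) (Fin d × Fin k) ℝ) (b : Fin d × Fin k → ℝ)
    (hrel : ∀ z, T z = L.mulVec (T' (v z)) + b) :
    IsUnit L := by
  choose z0 zs hzs using hind
  -- the base point and perturbed points
  set zpt : Fin d → Fin k → (Fin d → ℝ) :=
    fun i p => Function.update z0 i (zs i p) with hzpt
  -- the difference matrix
  set Δ : Matrix (Fin d × Fin k) (Fin d × Fin k) ℝ :=
    Matrix.of fun ja ip => T (zpt ip.1 ip.2) ja - T z0 ja with hΔ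
  -- the blocks
  set B : Fin d → Matrix (Fin k) (Fin k) ℝ :=
    fun i => Matrix.of fun a p => Ti i (zs i p) a - Ti i (z0 i) a with hB
  -- Δ is a reindexed block diagonal matrix
  have hΔeq : Δ = (Matrix.blockDiagonal B).submatrix
      (Equiv.prodComm (Fin d) (Fin k)) (Equiv.prodComm (Fin d) (Fin k)) := by
    ext ⟨j, a⟩ ⟨i, p⟩
    simp only [hΔ, Matrix.of_apply, Matrix.submatrix_apply, Equiv.prodComm_apply, Prod.swap_prod_mk,
      Matrix.blockDiagonal_apply, hT]
    by_cases hji : j = i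
    · subst hji
      simp [hzpt, hB]
    · simp [hzpt, hB, Function.update_of_ne hji, hji]
  -- each block is invertible
  have hBunit : ∀ i, IsUnit (B i) := by
    intro i
    rw [← Matrix.linearIndependent_cols_iff_isUnit]
    have h : (fun p => (B i).transpose p) = fun p => Ti i (zs i p) - Ti i (z0 i) := by
      funext p; funext a; simp [hB]
    rw [show (B i).col = fun p => (B i).transpose p from rfl, h]; exact hzs i
  -- hence Δ has unit determinant
  have hΔdet : IsUnit Δ.det := by
    rw [hΔeq, Matrix.det_submatrix_equiv_self, Matrix.det_blockDiagonal]
    rw [isUnit_iff_ne_zero, Finset.prod_ne_zero_iff]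
    exact fun i _ => ((Matrix.isUnit_iff_isUnit_det (B i)).mp (hBunit i)).ne_zero
  -- Δ factors through L
  set M : Matrix (Fin d × Fin k) (Fin d × Fin k) ℝ :=
    Matrix.of fun ja ip => T' (v (zpt ip.1 ip.2)) ja - T' (v z0) ja with hM
  have hfac : Δ = L * M := by
    ext ja ip
    have h1 := congrFun (hrel (zpt ip.1 ip.2)) ja
    have h2 := congrFun (hrel z0) ja
    simp only [Pi.add_apply] at h1 h2
    simp only [hΔ, hM, Matrix.of_apply, Matrix.mul_apply, h1, h2, Matrix.mulVec, dotProduct]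
    ring_nf
    rw [← Finset.sum_sub_distrib]
  have : IsUnit L.det := by
    have := hΔdet
    rw [hfac, Matrix.det_mul] at this
    exact isUnit_of_mul_isUnit_left this
  exact (Matrix.isUnit_iff_isUnit_det L).mpr this
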